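/- Let T be a family of subsets of an ordinal θ, and suppose |T| ≤ δ. Then the set σ = { β < θ : ∃ t, t' ∈ T such that t ∩ β = t' ∩ β and β belongs to exactly one of t, t' } of branching points of T has cardinality at most δ. -/
import Mathlib


open Cardinal

/-- a family of at most δ many subsets of an ordinal has at most
δ many branching points. -/
theorem stmt_3 (θ : Ordinal) (δ : Cardinal) (hδ : ℵ₀ ≤ δ)
    (T : Set (Set Ordinal)) (hTsub : ∀ t ∈ T, t ⊆ Set.Iio θ)
    (hTcard : #T ≤ δ) :
    #({β | β < θ ∧ ∃ t ∈ T, ∃ t' ∈ T,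
        t ∩ Set.Iio β = t' ∩ Set.Iio β ∧ (β ∈ t ↔ β ∉ t')} : Set Ordinal) ≤ δ := by
  classical
  set σ : Set Ordinal := {β | β < θ ∧ ∃ t ∈ T, ∃ t' ∈ T,
      t ∩ Set.Iio β = t' ∩ Set.Iio β ∧ (β ∈ t ↔ β ∉ t')} with hσ
  have key : ∀ β : σ, ∃ t, t ∈ T ∧ ∃ t', t' ∈ T ∧
      t ∩ Set.Iio (β : Ordinal) = t' ∩ Set.Iio (β : Ordinal) ∧
      ((β : Ordinal) ∈ t ↔ (β : Ordinal) ∉ t') := by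
    rintro ⟨β, hβ⟩
    obtain ⟨-, t, ht, t', ht', h1, h2⟩ := hβ
    exact ⟨t, ht, t', ht', h1, h2⟩
  choose t ht t' ht' heq hiff using key
  have hinj : Function.Injective (fun β : σ => ((⟨t β, ht β⟩, ⟨t' β, ht' β⟩) : T × T)) := by
    intro β γ h
    simp only [Prod.mk.injEq, Subtype.mk.injEq] at h
    obtain ⟨h1, h2⟩ := h
    by_contra hne
    have hne' : (β : Ordinal) ≠ (γ : Ordinal) := fun e => hne (Subtype.ext e)
    -- wlog β < γ
    have main : ∀ β γ : σ, (β : Ordinal) < (γ : Ordinal) → t β = t γ → t' β = t' γ → False := by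
      intro β γ hlt e1 e2
      have := heq γ
      have hb : (β : Ordinal) ∈ t γ ↔ (β : Ordinal) ∈ t' γ := by
        constructor
        · intro hb
          have : (β : Ordinal) ∈ t γ ∩ Set.Iio (γ : Ordinal) := ⟨hb, hlt⟩
          rw [heq γ] at this; exact this.1
        · intro hb
          have : (β : Ordinal) ∈ t' γ ∩ Set.Iio (γ : Ordinal) := ⟨hb, hlt⟩
          rw [← heq γ] at this; exact this.1
      rw [← e1, ← e2] at hb
      have := hiff β
      tauto
    rcases lt_or_gt_of_ne hne' with h | h
    · exact main β γ h h1 h2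
    · exact main γ β h h1.symm h2.symm
  calc #σ ≤ #(T × T) := Cardinal.mk_le_of_injective hinj
    _ = #T * #T := by simp [Cardinal.mk_prod]
    _ ≤ δ * δ := mul_le_mul' hTcard hTcard
    _ = δ := Cardinal.mul_eq_self hδ
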